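/- Let O be a discrete valuation ring with maximal ideal 𝔪, uniformizer π, finite residue field of cardinality q, and field of fractions K. Let a ∈ Mat_{d×e}(O) have rank r as a matrix over K, and suppose there are u ∈ GL_d(O), v ∈ GL_e(O), and integers 0 ≤ λ_1 ≤ ⋯ ≤ λ_r such that u·a·v is the d×e matrix with diagonal entries π^{λ_1}, …, π^{λ_r} in positions (1,1), …, (r,r) and all other entries zero. Let a_n ∈ Mat_{d×e}(O/𝔪^n) denote the entrywise reduction of a modulo 𝔪^n. Then |ker(a_n)| = q^{min(λ_1,n) + ⋯ + min(λ_r,n) + (d-r)n} and |image(a_n)| = q^{rn - (min(λ_1,n) + ⋯ + min(λ_r,n))}, where ker(a_n) = {x ∈ (O/𝔪^n)^d : x·a_n = 0} and image(a_n) = {x·a_n : x ∈ (O/𝔪^n)^d}. -/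

import Mathlib

set_option linter.unusedSectionVars false

open IsLocalRing

section DVRAux
variable {O : Type*} [CommRing O] [IsDomain O] [IsDiscreteValuationRing O]
    [Finite (ResidueField O)] (π : O) (hπ : Irreducible π)

lemma cardq (k : ℕ) :
    Nat.card (O ⧸ maximalIdeal O ^ k) = Nat.card (ResidueField O) ^ k := by
  have h1 : (maximalIdeal O) ≠ ⊥ :=
    Ring.ne_bot_of_isMaximal_of_not_isField (maximalIdeal.isMaximal O)
      (IsDiscreteValuationRing.not_isField O)
  have := cardQuot_pow_of_prime (P := maximalIdeal O) h1 (i := k)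
  simpa [Submodule.cardQuot_apply, ResidueField] using this

include hπ in
lemma mem_iff (lam n : ℕ) (z : O) :
    z * π ^ lam ∈ maximalIdeal O ^ n ↔ z ∈ maximalIdeal O ^ (n - min lam n) := by
  have hm : maximalIdeal O = Ideal.span {π} :=
    (IsDiscreteValuationRing.irreducible_iff_uniformizer π).mp hπ
  rw [hm, Ideal.span_singleton_pow, Ideal.span_singleton_pow,
    Ideal.mem_span_singleton, Ideal.mem_span_singleton]
  rcases le_or_gt n lam with h | h
  · simp only [min_eq_right h, Nat.sub_self, pow_zero]
    constructor
    · intro _; exact one_dvd _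
    · intro _; exact dvd_mul_of_dvd_right (pow_dvd_pow π h) z
  · have hmin : min lam n = lam := min_eq_left h.le
    rw [hmin]
    have hne : π ^ lam ≠ 0 := pow_ne_zero _ hπ.ne_zero
    have hsplit : π ^ n = π ^ lam * π ^ (n - lam) := by
      rw [← pow_add]; congr 1; omega
    constructor
    · intro ⟨c, hc⟩
      refine ⟨c, mul_left_cancel₀ hne ?_⟩
      rw [← mul_comm z (π ^ lam), hc, hsplit, mul_assoc]
    · intro ⟨c, hc⟩
      exact ⟨c, by rw [hc, hsplit, mul_comm, mul_assoc]⟩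

include hπ in
lemma card_ann (lam n : ℕ) :
    Nat.card {y : O ⧸ maximalIdeal O ^ n |
        y * Ideal.Quotient.mk (maximalIdeal O ^ n) (π ^ lam) = 0}
      = Nat.card (ResidueField O) ^ min lam n ∧
    Nat.card (Set.range fun y : O ⧸ maximalIdeal O ^ n =>
        y * Ideal.Quotient.mk (maximalIdeal O ^ n) (π ^ lam))
      = Nat.card (ResidueField O) ^ (n - min lam n) := by
  have hq0 : 0 < Nat.card (ResidueField O) := Nat.card_pos
  set m := n - min lam n with hmdef
  have hle : maximalIdeal O ^ n ≤ maximalIdeal O ^ m :=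
    Ideal.pow_le_pow_right (by omega)
  set g := Ideal.Quotient.factor hle with hg
  set c := Ideal.Quotient.mk (maximalIdeal O ^ n) (π ^ lam) with hc
  set f : (O ⧸ maximalIdeal O ^ n) →+ (O ⧸ maximalIdeal O ^ n) := AddMonoidHom.mulRight c
    with hf
  have hfa : ∀ y, f y = y * c := fun y => rfl
  have hker : ∀ y : O ⧸ maximalIdeal O ^ n, y * c = 0 ↔ g y = 0 := by
    intro y
    obtain ⟨z, rfl⟩ := Ideal.Quotient.mk_surjective y
    rw [hc, ← map_mul, Ideal.Quotient.eq_zero_iff_mem, hg, Ideal.Quotient.factor_mk,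
      Ideal.Quotient.eq_zero_iff_mem]
    exact mem_iff π hπ lam n z
  have hgsurj : Function.Surjective g := by
    intro y
    obtain ⟨z, rfl⟩ := Ideal.Quotient.mk_surjective y
    exact ⟨Ideal.Quotient.mk _ z, Ideal.Quotient.factor_mk _ z⟩
  have e1 := QuotientAddGroup.quotientKerEquivOfSurjective g.toAddMonoidHom hgsurj
  have h1 : Nat.card (O ⧸ maximalIdeal O ^ n)
      = Nat.card (O ⧸ maximalIdeal O ^ m) * Nat.card (g.toAddMonoidHom).ker := by
    rw [AddSubgroup.card_eq_card_quotient_mul_card_addSubgroup (g.toAddMonoidHom).ker,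
      Nat.card_congr e1.toEquiv]
  have hmn : m + min lam n = n := by omega
  have hcardker : Nat.card (g.toAddMonoidHom).ker
      = Nat.card (ResidueField O) ^ min lam n := by
    refine Nat.eq_of_mul_eq_mul_left (pow_pos hq0 m) ?_
    rw [← cardq m, ← h1, cardq n, cardq m, ← pow_add, hmn]
  have ekv : {y : O ⧸ maximalIdeal O ^ n // y * c = 0} ≃ (g.toAddMonoidHom).ker :=
    Equiv.subtypeEquivRight (fun y => by
      simp only [AddMonoidHom.mem_ker, RingHom.toAddMonoidHom_eq_coe,
        AddMonoidHom.coe_coe]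
      exact hker y)
  have hkercard : Nat.card {y : O ⧸ maximalIdeal O ^ n | y * c = 0}
      = Nat.card (ResidueField O) ^ min lam n := by
    exact (Nat.card_congr ekv).trans hcardker
  refine ⟨hkercard, ?_⟩
  have hkerf : f.ker = (g.toAddMonoidHom).ker := by
    ext y
    simp only [AddMonoidHom.mem_ker, hfa, RingHom.toAddMonoidHom_eq_coe,
      AddMonoidHom.coe_coe]
    exact hker y
  have e2 := QuotientAddGroup.quotientKerEquivRange f
  have h3 : Nat.card (O ⧸ maximalIdeal O ^ n)
      = Nat.card f.range * Nat.card f.ker := by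
    rw [AddSubgroup.card_eq_card_quotient_mul_card_addSubgroup f.ker,
      Nat.card_congr e2.toEquiv]
  have erg : (Set.range fun y : O ⧸ maximalIdeal O ^ n => y * c) ≃ f.range :=
    Equiv.subtypeEquivRight (fun y => by
      simp only [Set.mem_range, AddMonoidHom.mem_range, hfa])
  have hkpos : 0 < Nat.card f.ker := by
    rw [hkerf, hcardker]; exact pow_pos hq0 _
  have hrange : Nat.card f.range = Nat.card (ResidueField O) ^ (n - min lam n) := by
    refine Nat.eq_of_mul_eq_mul_right hkpos ?_
    rw [← h3, cardq n, hkerf, hcardker, ← pow_add]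
    congr 1
    omega
  exact (Nat.card_congr erg).trans hrange


end DVRAux

/-- Sizes of the kernel and image of the reduction modulo `𝔪^n` of a matrix over a DVR
whose Smith normal form has elementary divisors `π^(λ 1), …, π^(λ r)`. -/
theorem card_ker_and_image_of_smith_normal_form
    {O : Type*} [CommRing O] [IsDomain O] [IsDiscreteValuationRing O]
    (π : O) (hπ : Irreducible π)
    [Finite (IsLocalRing.ResidueField O)]
    (q : ℕ) (hq : Nat.card (IsLocalRing.ResidueField O) = q)
    {d e : ℕ} (a : Matrix (Fin d) (Fin e) O) (r : ℕ)
    (hrank : (a.map (algebraMap O (FractionRing O))).rank = r)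
    (lam : Fin r → ℕ) (hlam : Monotone lam)
    (u : (Matrix (Fin d) (Fin d) O)ˣ) (v : (Matrix (Fin e) (Fin e) O)ˣ)
    (hsnf : ∀ (i : Fin d) (j : Fin e),
      ((u : Matrix (Fin d) (Fin d) O) * a * (v : Matrix (Fin e) (Fin e) O)) i j =
        if h : (i : ℕ) = (j : ℕ) ∧ (i : ℕ) < r then π ^ lam ⟨(i : ℕ), h.2⟩ else 0)
    (n : ℕ) :
    Nat.card {x : Fin d → O ⧸ IsLocalRing.maximalIdeal O ^ n |
        Matrix.vecMul x (a.map (Ideal.Quotient.mk (IsLocalRing.maximalIdeal O ^ n))) = 0} =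
      q ^ ((∑ k : Fin r, min (lam k) n) + (d - r) * n) ∧
    Nat.card (Set.range (fun x : Fin d → O ⧸ IsLocalRing.maximalIdeal O ^ n =>
        Matrix.vecMul x (a.map (Ideal.Quotient.mk (IsLocalRing.maximalIdeal O ^ n))))) =
      q ^ (r * n - ∑ k : Fin r, min (lam k) n) := by
  subst hq
  -- rank bounds
  have hrd : r ≤ d := by
    have h := (a.map (algebraMap O (FractionRing O))).rank_le_card_height
    rw [hrank, Fintype.card_fin] at h
    exact h
  have hre : r ≤ e := by
    have h := (a.map (algebraMap O (FractionRing O))).rank_le_card_width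
    rw [hrank, Fintype.card_fin] at h
    exact h
  set q := Nat.card (ResidueField O) with hqdef
  set φ := Ideal.Quotient.mk (maximalIdeal O ^ n) with hφ
  set R := O ⧸ maximalIdeal O ^ n with hR
  set A := a.map φ with hA
  set Dn := ((u : Matrix (Fin d) (Fin d) O) * a * (v : Matrix (Fin e) (Fin e) O)).map φ
    with hDn
  set U := Units.map (RingHom.mapMatrix (m := Fin d) φ).toMonoidHom u with hU
  set V := Units.map (RingHom.mapMatrix (m := Fin e) φ).toMonoidHom v with hV
  have hUval : (U : Matrix (Fin d) (Fin d) R) = (u : Matrix (Fin d) (Fin d) O).map φ := rfl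
  have hVval : (V : Matrix (Fin e) (Fin e) R) = (v : Matrix (Fin e) (Fin e) O).map φ := rfl
  have hDnUAV : Dn = (U : Matrix (Fin d) (Fin d) R) * A * (V : Matrix (Fin e) (Fin e) R) := by
    rw [hDn, Matrix.map_mul, Matrix.map_mul, hUval, hVval, hA]
  -- entries of Dn
  have hDnij : ∀ (i : Fin d) (j : Fin e), Dn i j =
      if h : (i : ℕ) = (j : ℕ) ∧ (i : ℕ) < r then φ (π ^ lam ⟨(i : ℕ), h.2⟩) else 0 := by
    intro i j
    rw [hDn, Matrix.map_apply, hsnf]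
    split
    · rfl
    · exact map_zero φ
  -- vecMul formula
  have hvec : ∀ (x : Fin d → R) (j : Fin e), Matrix.vecMul x Dn j =
      if h : (j : ℕ) < r then x ⟨(j : ℕ), lt_of_lt_of_le h hrd⟩ *
        φ (π ^ lam ⟨(j : ℕ), h⟩) else 0 := by
    intro x j
    rw [Matrix.vecMul, dotProduct]
    split
    · next h =>
      rw [Finset.sum_eq_single (⟨(j : ℕ), lt_of_lt_of_le h hrd⟩ : Fin d)]
      · rw [hDnij, dif_pos ⟨rfl, h⟩]
      · intro i _ hne
        rw [hDnij, dif_neg, mul_zero]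
        rintro ⟨h1, -⟩
        exact hne (Fin.ext h1)
      · intro habs
        exact absurd (Finset.mem_univ _) habs
    · next h =>
      apply Finset.sum_eq_zero
      intro i _
      rw [hDnij, dif_neg, mul_zero]
      rintro ⟨h1, h2⟩
      exact h (h1 ▸ h2)
  -- cancellation by unit matrices
  have hcancel : ∀ {k : ℕ} (W : (Matrix (Fin k) (Fin k) (O ⧸ maximalIdeal O ^ n))ˣ)
      (y : Fin k → R), Matrix.vecMul y (W : Matrix (Fin k) (Fin k) R) = 0 ↔ y = 0 := by
    intro k W y
    constructor
    · intro h
      have h2 := congrArg (fun z => Matrix.vecMul z ((W⁻¹ : _ˣ) : Matrix (Fin k) (Fin k) R)) h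
      simpa [Matrix.vecMul_vecMul] using h2
    · rintro rfl
      simp
  have hAD : A = ((U⁻¹ : _ˣ) : Matrix (Fin d) (Fin d) R) * Dn *
      ((V⁻¹ : _ˣ) : Matrix (Fin e) (Fin e) R) := by
    rw [hDnUAV, Matrix.mul_assoc (U : Matrix (Fin d) (Fin d) R) A (V : Matrix (Fin e) (Fin e) R),
      ← Matrix.mul_assoc ((U⁻¹ : _ˣ) : Matrix (Fin d) (Fin d) R)]
    rw [show ((U⁻¹ : _ˣ) : Matrix (Fin d) (Fin d) R) * (U : Matrix (Fin d) (Fin d) R) = 1 from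
      Units.inv_mul U]
    rw [Matrix.one_mul, Matrix.mul_assoc]
    rw [show (V : Matrix (Fin e) (Fin e) R) * ((V⁻¹ : _ˣ) : Matrix (Fin e) (Fin e) R) = 1 from
      Units.mul_inv V]
    rw [Matrix.mul_one]
  have hkeriff : ∀ x : Fin d → R, Matrix.vecMul x A = 0 ↔
      Matrix.vecMul (Matrix.vecMul x ((U⁻¹ : _ˣ) : Matrix (Fin d) (Fin d) R)) Dn = 0 := by
    intro x
    rw [hAD, ← Matrix.vecMul_vecMul, ← Matrix.vecMul_vecMul]
    exact hcancel V⁻¹ _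
  let EU : (Fin d → R) ≃ (Fin d → R) :=
    { toFun := fun x => Matrix.vecMul x ((U⁻¹ : _ˣ) : Matrix (Fin d) (Fin d) R)
      invFun := fun x => Matrix.vecMul x (U : Matrix (Fin d) (Fin d) R)
      left_inv := fun x => (Matrix.vecMul_vecMul _ _ _).trans (by rw [Units.inv_mul, Matrix.vecMul_one])
      right_inv := fun x => (Matrix.vecMul_vecMul _ _ _).trans (by rw [Units.mul_inv, Matrix.vecMul_one]) }
  have hcard1 : Nat.card {x : Fin d → R | Matrix.vecMul x A = 0}
      = Nat.card {x : Fin d → R | Matrix.vecMul x Dn = 0} :=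
    Nat.card_congr (EU.subtypeEquiv hkeriff)
  -- description of the kernel of Dn
  have hKD : ∀ x : Fin d → R, Matrix.vecMul x Dn = 0 ↔
      ∀ i : Fin d, (if h : (i : ℕ) < r then x i * φ (π ^ lam ⟨(i : ℕ), h⟩) = 0 else True) := by
    intro x
    constructor
    · intro hx i
      split
      · next h =>
        have h2 := congrFun hx ⟨(i : ℕ), lt_of_lt_of_le h hre⟩
        rw [hvec] at h2
        rw [dif_pos h] at h2
        simpa using h2
      · trivial
    · intro hx
      funext j
      rw [hvec]
      split
      · next h =>
        have h2 := hx ⟨(j : ℕ), lt_of_lt_of_le h hrd⟩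
        rw [dif_pos h] at h2
        simpa using h2
      · rfl
  have hcardKD : Nat.card {x : Fin d → R | Matrix.vecMul x Dn = 0}
      = ∏ i : Fin d, Nat.card {y : R // if h : (i : ℕ) < r then
          y * φ (π ^ lam ⟨(i : ℕ), h⟩) = 0 else True} := by
    rw [← Nat.card_pi]
    exact Nat.card_congr ((Equiv.subtypeEquivRight hKD).trans (Equiv.subtypePiEquivPi
      (p := fun (i : Fin d) (y : R) =>
        if h : (i : ℕ) < r then y * φ (π ^ lam ⟨(i : ℕ), h⟩) = 0 else True)))
  have hfac : ∀ i : Fin d, Nat.card {y : R // if h : (i : ℕ) < r then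
        y * φ (π ^ lam ⟨(i : ℕ), h⟩) = 0 else True}
      = q ^ (if h : (i : ℕ) < r then min (lam ⟨(i : ℕ), h⟩) n else n) := by
    intro i
    by_cases h : (i : ℕ) < r
    · rw [dif_pos h]
      simp only [dif_pos h]
      exact (card_ann π hπ (lam ⟨(i : ℕ), h⟩) n).1
    · rw [dif_neg h]
      simp only [dif_neg h]
      have h2 : Nat.card {y : R // True} = Nat.card R :=
        Nat.card_congr (Equiv.subtypeUnivEquiv fun _ => trivial)
      rw [h2]
      exact cardq n
  have hsum : (∑ i : Fin d, if h : (i : ℕ) < r then min (lam ⟨(i : ℕ), h⟩) n else n)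
      = (∑ k : Fin r, min (lam k) n) + (d - r) * n := by
    set g : ℕ → ℕ := fun k => if h : k < r then min (lam ⟨k, h⟩) n else n with hg
    have h1 : (∑ i : Fin d, if h : (i : ℕ) < r then min (lam ⟨(i : ℕ), h⟩) n else n)
        = ∑ i ∈ Finset.range d, g i := by
      rw [← Fin.sum_univ_eq_sum_range]
    have h2 : ∑ i ∈ Finset.range d, g i
        = ∑ i ∈ Finset.range r, g i + ∑ i ∈ Finset.Ico r d, g i := by
      rw [Finset.range_eq_Ico, ← Finset.sum_Ico_consecutive _ (Nat.zero_le r) hrd,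
        ← Finset.range_eq_Ico]
    have h3 : ∑ i ∈ Finset.range r, g i = ∑ k : Fin r, min (lam k) n := by
      rw [← Fin.sum_univ_eq_sum_range]
      apply Finset.sum_congr rfl
      intro k _
      simp only [hg, dif_pos k.isLt, Fin.eta]
    have h4 : ∑ i ∈ Finset.Ico r d, g i = (d - r) * n := by
      rw [Finset.sum_congr rfl (g := fun _ => n) (fun i hi => by
        simp only [hg, dif_neg (not_lt.mpr (Finset.mem_Ico.mp hi).1)]),
        Finset.sum_const, Nat.card_Ico, smul_eq_mul]
    rw [h1, h2, h3, h4]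
  have hker : Nat.card {x : Fin d → R | Matrix.vecMul x A = 0}
      = q ^ ((∑ k : Fin r, min (lam k) n) + (d - r) * n) := by
    rw [hcard1, hcardKD]
    rw [Finset.prod_congr rfl (fun i _ => hfac i), Finset.prod_pow_eq_pow_sum, hsum]
  refine ⟨hker, ?_⟩
  -- image part
  have himiff : ∀ y : Fin e → R,
      (y ∈ Set.range fun x : Fin d → R => Matrix.vecMul x Dn) ↔
      (Matrix.vecMul y ((V⁻¹ : _ˣ) : Matrix (Fin e) (Fin e) R)
        ∈ Set.range fun x : Fin d → R => Matrix.vecMul x A) := by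
    intro y
    constructor
    · rintro ⟨x, rfl⟩
      refine ⟨Matrix.vecMul x (U : Matrix (Fin d) (Fin d) R), ?_⟩
      show Matrix.vecMul (Matrix.vecMul x (U : Matrix (Fin d) (Fin d) R)) A
        = Matrix.vecMul (Matrix.vecMul x Dn) ((V⁻¹ : _ˣ) : Matrix (Fin e) (Fin e) R)
      rw [Matrix.vecMul_vecMul, Matrix.vecMul_vecMul, hAD, ← Matrix.mul_assoc,
        ← Matrix.mul_assoc,
        show (U : Matrix (Fin d) (Fin d) R) * ((U⁻¹ : _ˣ) : Matrix (Fin d) (Fin d) R) = 1 from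
          Units.mul_inv U, Matrix.one_mul]
    · rintro ⟨x, hx⟩
      refine ⟨Matrix.vecMul x ((U⁻¹ : _ˣ) : Matrix (Fin d) (Fin d) R), ?_⟩
      show Matrix.vecMul (Matrix.vecMul x ((U⁻¹ : _ˣ) : Matrix (Fin d) (Fin d) R)) Dn = y
      have h2 := congrArg (fun z => Matrix.vecMul z (V : Matrix (Fin e) (Fin e) R)) hx
      simp only [Matrix.vecMul_vecMul] at h2 ⊢
      rw [show ((V⁻¹ : _ˣ) : Matrix (Fin e) (Fin e) R) * (V : Matrix (Fin e) (Fin e) R) = 1 from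
        Units.inv_mul V, Matrix.vecMul_one] at h2
      rw [← h2, hDnUAV, ← Matrix.mul_assoc, ← Matrix.mul_assoc,
        show ((U⁻¹ : _ˣ) : Matrix (Fin d) (Fin d) R) * (U : Matrix (Fin d) (Fin d) R) = 1 from
          Units.inv_mul U, Matrix.one_mul]
  let EV : (Fin e → R) ≃ (Fin e → R) :=
    { toFun := fun y => Matrix.vecMul y ((V⁻¹ : _ˣ) : Matrix (Fin e) (Fin e) R)
      invFun := fun y => Matrix.vecMul y (V : Matrix (Fin e) (Fin e) R)
      left_inv := fun y => (Matrix.vecMul_vecMul _ _ _).trans (by rw [Units.inv_mul, Matrix.vecMul_one])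
      right_inv := fun y => (Matrix.vecMul_vecMul _ _ _).trans (by rw [Units.mul_inv, Matrix.vecMul_one]) }
  have hcard2 : Nat.card (Set.range fun x : Fin d → R => Matrix.vecMul x A)
      = Nat.card (Set.range fun x : Fin d → R => Matrix.vecMul x Dn) :=
    (Nat.card_congr (EV.subtypeEquiv himiff)).symm
  have hRD : (Set.range fun x : Fin d → R => Matrix.vecMul x Dn)
      = {y : Fin e → R | ∀ j : Fin e, if h : (j : ℕ) < r then
          (∃ t : R, t * φ (π ^ lam ⟨(j : ℕ), h⟩) = y j) else y j = 0} := by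
    ext y
    constructor
    · rintro ⟨x, rfl⟩
      intro j
      beta_reduce
      split
      · next h =>
        exact ⟨x ⟨(j : ℕ), lt_of_lt_of_le h hrd⟩, by rw [hvec, dif_pos h]⟩
      · next h =>
        rw [hvec, dif_neg h]
    · intro hy
      have hy' : ∀ (j : Fin e) (h : (j : ℕ) < r),
          ∃ t : R, t * φ (π ^ lam ⟨(j : ℕ), h⟩) = y j := by
        intro j h
        have h2 := hy j
        rwa [dif_pos h] at h2
      have hy0 : ∀ j : Fin e, ¬ (j : ℕ) < r → y j = 0 := by
        intro j h
        have h2 := hy j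
        rwa [dif_neg h] at h2
      choose t ht using hy'
      refine ⟨fun i => if h : (i : ℕ) < r then t ⟨(i : ℕ), lt_of_lt_of_le h hre⟩ h else 0, ?_⟩
      beta_reduce
      funext j
      rw [hvec]
      split
      · next h =>
        exact ht j h
      · next h =>
        exact (hy0 j h).symm
  have hcardRD : Nat.card (Set.range fun x : Fin d → R => Matrix.vecMul x Dn)
      = ∏ j : Fin e, Nat.card {z : R // if h : (j : ℕ) < r then
          (∃ t : R, t * φ (π ^ lam ⟨(j : ℕ), h⟩) = z) else z = 0} := by
    rw [hRD, ← Nat.card_pi]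
    exact Nat.card_congr (Equiv.subtypePiEquivPi
      (p := fun (j : Fin e) (z : R) =>
        if h : (j : ℕ) < r then (∃ t : R, t * φ (π ^ lam ⟨(j : ℕ), h⟩) = z) else z = 0))
  have hfac2 : ∀ j : Fin e, Nat.card {z : R // if h : (j : ℕ) < r then
        (∃ t : R, t * φ (π ^ lam ⟨(j : ℕ), h⟩) = z) else z = 0}
      = q ^ (if h : (j : ℕ) < r then n - min (lam ⟨(j : ℕ), h⟩) n else 0) := by
    intro j
    by_cases h : (j : ℕ) < r
    · simp only [dif_pos h]
      exact (card_ann π hπ (lam ⟨(j : ℕ), h⟩) n).2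
    · simp only [dif_neg h, pow_zero]
      have : Unique {z : R // z = 0} :=
        ⟨⟨⟨0, rfl⟩⟩, by rintro ⟨z, rfl⟩; rfl⟩
      exact Nat.card_unique
  have hminle : ∀ k : Fin r, min (lam k) n ≤ n := fun k => min_le_right _ _
  have hsum2 : (∑ j : Fin e, if h : (j : ℕ) < r then n - min (lam ⟨(j : ℕ), h⟩) n else 0)
      = r * n - ∑ k : Fin r, min (lam k) n := by
    set g : ℕ → ℕ := fun k => if h : k < r then n - min (lam ⟨k, h⟩) n else 0 with hg
    have h1 : (∑ j : Fin e, if h : (j : ℕ) < r then n - min (lam ⟨(j : ℕ), h⟩) n else 0)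
        = ∑ j ∈ Finset.range e, g j := by
      rw [← Fin.sum_univ_eq_sum_range]
    have h2 : ∑ j ∈ Finset.range e, g j
        = ∑ j ∈ Finset.range r, g j + ∑ j ∈ Finset.Ico r e, g j := by
      rw [Finset.range_eq_Ico, ← Finset.sum_Ico_consecutive _ (Nat.zero_le r) hre,
        ← Finset.range_eq_Ico]
    have h3 : ∑ j ∈ Finset.range r, g j = ∑ k : Fin r, (n - min (lam k) n) := by
      rw [← Fin.sum_univ_eq_sum_range]
      apply Finset.sum_congr rfl
      intro k _
      simp only [hg, dif_pos k.isLt, Fin.eta]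
    have h4 : ∑ j ∈ Finset.Ico r e, g j = 0 := by
      apply Finset.sum_eq_zero
      intro j hj
      simp only [hg, dif_neg (not_lt.mpr (Finset.mem_Ico.mp hj).1)]
    have h5 : (∑ k : Fin r, (n - min (lam k) n)) + ∑ k : Fin r, min (lam k) n = r * n := by
      rw [← Finset.sum_add_distrib]
      rw [Finset.sum_congr rfl (fun k _ => Nat.sub_add_cancel (hminle k))]
      simp [Finset.sum_const, mul_comm]
    omega
  rw [hcard2, hcardRD, Finset.prod_congr rfl (fun j _ => hfac2 j),
    Finset.prod_pow_eq_pow_sum, hsum2]
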